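/- Let n ≥ 2 and let 2 ≤ b < m be integers. Let e₁ and e₂ be the first two standard basis vectors of ℝ^n, set λ = √( b(b−1) / ((m−b) + (m−b)²) ), and define ω₁ = −(b−1)·e₁, ω_ℓ = e₁ for 2 ≤ ℓ ≤ b, ω_ℓ = λ·e₂ for b+1 ≤ ℓ ≤ m, and ω₀ = (b−m)·λ·e₂. Then for every subset S ⊆ {1,…,m}: if Σ_{ℓ∈S} ω_ℓ = Σ_{ℓ∉S} ω_ℓ + ω₀ and Σ_{ℓ∈S} ‖ω_ℓ‖² = Σ_{ℓ∉S} ‖ω_ℓ‖² + ‖ω₀‖², then S = {1,…,b}. -/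

import Mathlib

/-- Sum of a function over a subset of `Icc 1 m` that is constant on the three
pieces `{1}`, `Icc 2 b`, `Icc (b+1) m`. -/
lemma sum_const_on_pieces (b m : ℕ) (hb : 2 ≤ b) (hbm : b < m)
    (S' : Finset ℕ) (hS' : S' ⊆ Finset.Icc 1 m)
    (f : ℕ → ℝ) (c1 c2 c3 : ℝ) (h1 : f 1 = c1)
    (h2 : ∀ ℓ ∈ Finset.Icc 2 b, f ℓ = c2)
    (h3 : ∀ ℓ ∈ Finset.Icc (b + 1) m, f ℓ = c3) :
    ∑ ℓ ∈ S', f ℓ = (if 1 ∈ S' then c1 else 0)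
      + ((S' ∩ Finset.Icc 2 b).card : ℝ) * c2
      + ((S' ∩ Finset.Icc (b + 1) m).card : ℝ) * c3 := by
  have hdec : S' = (S' ∩ {1}) ∪ (S' ∩ Finset.Icc 2 b) ∪ (S' ∩ Finset.Icc (b + 1) m) := by
    ext x
    simp only [Finset.mem_union, Finset.mem_inter, Finset.mem_singleton, Finset.mem_Icc]
    constructor
    · intro hx
      have h := Finset.mem_Icc.mp (hS' hx)
      simp only [hx, true_and]
      omega
    · rintro ((⟨hx, _⟩ | ⟨hx, _⟩) | ⟨hx, _⟩) <;> exact hx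
  have d12 : Disjoint (S' ∩ {1}) (S' ∩ Finset.Icc 2 b) := by
    rw [Finset.disjoint_left]
    intro x hx1 hx2
    simp only [Finset.mem_inter, Finset.mem_singleton, Finset.mem_Icc] at hx1 hx2
    omega
  have d3 : Disjoint ((S' ∩ {1}) ∪ (S' ∩ Finset.Icc 2 b)) (S' ∩ Finset.Icc (b + 1) m) := by
    rw [Finset.disjoint_left]
    intro x hx1 hx2
    simp only [Finset.mem_union, Finset.mem_inter, Finset.mem_singleton,
      Finset.mem_Icc] at hx1 hx2
    omega
  have s1 : ∑ ℓ ∈ S' ∩ {1}, f ℓ = if 1 ∈ S' then c1 else 0 := by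
    by_cases h : 1 ∈ S'
    · rw [Finset.inter_comm, Finset.singleton_inter_of_mem h, Finset.sum_singleton, h1, if_pos h]
    · rw [Finset.inter_comm, Finset.singleton_inter_of_notMem h, Finset.sum_empty, if_neg h]
  have s2 : ∑ ℓ ∈ S' ∩ Finset.Icc 2 b, f ℓ = ((S' ∩ Finset.Icc 2 b).card : ℝ) * c2 := by
    rw [Finset.sum_congr rfl (fun x hx => h2 x (Finset.mem_of_mem_inter_right hx)),
      Finset.sum_const, nsmul_eq_mul]
  have s3 : ∑ ℓ ∈ S' ∩ Finset.Icc (b + 1) m, f ℓ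
      = ((S' ∩ Finset.Icc (b + 1) m).card : ℝ) * c3 := by
    rw [Finset.sum_congr rfl (fun x hx => h3 x (Finset.mem_of_mem_inter_right hx)),
      Finset.sum_const, nsmul_eq_mul]
  conv_lhs => rw [hdec]
  rw [Finset.sum_union d3, Finset.sum_union d12, s1, s2, s3]

/-- Non-resonance property of the explicit frequency vectors used to recover
`B_{b(m-b)}`: the only subset `S ⊆ {1,…,m}` with
`Σ_{ℓ∈S} ω_ℓ = Σ_{ℓ∉S} ω_ℓ + ω₀` and `Σ_{ℓ∈S} ‖ω_ℓ‖² = Σ_{ℓ∉S} ‖ω_ℓ‖² + ‖ω₀‖²`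
is `S = {1,…,b}`. -/
theorem explicit_frequencies_nonresonance
    (n : ℕ) (hn : 2 ≤ n) (b m : ℕ) (hb : 2 ≤ b) (hbm : b < m)
    (e₁ e₂ : EuclideanSpace ℝ (Fin n))
    (he₁ : e₁ = EuclideanSpace.single ⟨0, by omega⟩ 1)
    (he₂ : e₂ = EuclideanSpace.single ⟨1, by omega⟩ 1)
    (lam : ℝ)
    (hlam : lam = Real.sqrt (((b : ℝ) * ((b : ℝ) - 1))
      / (((m : ℝ) - (b : ℝ)) + ((m : ℝ) - (b : ℝ)) ^ 2)))
    (ω : ℕ → EuclideanSpace ℝ (Fin n))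
    (hω1 : ω 1 = (-((b : ℝ) - 1)) • e₁)
    (hωmid : ∀ ℓ, 2 ≤ ℓ → ℓ ≤ b → ω ℓ = e₁)
    (hωtail : ∀ ℓ, b + 1 ≤ ℓ → ℓ ≤ m → ω ℓ = lam • e₂)
    (hω0 : ω 0 = (((b : ℝ) - (m : ℝ)) * lam) • e₂) :
    ∀ S : Finset ℕ, S ⊆ Finset.Icc 1 m →
      (∑ ℓ ∈ S, ω ℓ) = (∑ ℓ ∈ Finset.Icc 1 m \ S, ω ℓ) + ω 0 →
      (∑ ℓ ∈ S, ‖ω ℓ‖ ^ 2) = (∑ ℓ ∈ Finset.Icc 1 m \ S, ‖ω ℓ‖ ^ 2) + ‖ω 0‖ ^ 2 →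
      S = Finset.Icc 1 b := by
  intro S hS hvec hnorm
  set i0 : Fin n := ⟨0, by omega⟩ with hi0def
  set i1 : Fin n := ⟨1, by omega⟩ with hi1def
  set C : Finset ℕ := Finset.Icc 1 m \ S with hC
  have hCsub : C ⊆ Finset.Icc 1 m := Finset.sdiff_subset
  -- basic real facts
  have hBr : (2 : ℝ) ≤ (b : ℝ) := by exact_mod_cast hb
  have hMr : (b : ℝ) + 1 ≤ (m : ℝ) := by exact_mod_cast hbm
  have hDpos : 0 < ((m : ℝ) - (b : ℝ)) + ((m : ℝ) - (b : ℝ)) ^ 2 := by nlinarith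
  have hlam2 : lam ^ 2 * (((m : ℝ) - (b : ℝ)) + ((m : ℝ) - (b : ℝ)) ^ 2)
      = (b : ℝ) * ((b : ℝ) - 1) := by
    rw [hlam, Real.sq_sqrt (div_nonneg (by nlinarith) (le_of_lt hDpos))]
    field_simp
    rw [mul_assoc, mul_div_cancel_right₀ _ (ne_of_gt (by nlinarith : (0:ℝ) < ((m:ℝ) - b) * (1 + ((m:ℝ) - b))))]
  have hlampos : 0 < lam := by
    rw [hlam]
    apply Real.sqrt_pos.mpr
    apply div_pos (by nlinarith) hDpos
  -- component values
  have he₁0 : e₁ i0 = 1 := by simp [he₁, hi0def]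
  have he₁1 : e₁ i1 = 0 := by simp [he₁, hi1def, EuclideanSpace.single_apply, Fin.ext_iff]
  have he₂0 : e₂ i0 = 0 := by simp [he₂, hi0def, EuclideanSpace.single_apply, Fin.ext_iff]
  have he₂1 : e₂ i1 = 1 := by simp [he₂, hi1def]
  have hω1_0 : ω 1 i0 = -((b : ℝ) - 1) := by rw [hω1]; simp [he₁0]
  have hω1_1 : ω 1 i1 = 0 := by rw [hω1]; simp [he₁1]
  have hωmid0 : ∀ ℓ ∈ Finset.Icc 2 b, ω ℓ i0 = 1 := by
    intro ℓ hℓ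
    rw [hωmid ℓ (Finset.mem_Icc.mp hℓ).1 (Finset.mem_Icc.mp hℓ).2, he₁0]
  have hωmid1 : ∀ ℓ ∈ Finset.Icc 2 b, ω ℓ i1 = 0 := by
    intro ℓ hℓ
    rw [hωmid ℓ (Finset.mem_Icc.mp hℓ).1 (Finset.mem_Icc.mp hℓ).2, he₁1]
  have hωtail0 : ∀ ℓ ∈ Finset.Icc (b + 1) m, ω ℓ i0 = 0 := by
    intro ℓ hℓ
    rw [hωtail ℓ (Finset.mem_Icc.mp hℓ).1 (Finset.mem_Icc.mp hℓ).2]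
    simp [he₂0]
  have hωtail1 : ∀ ℓ ∈ Finset.Icc (b + 1) m, ω ℓ i1 = lam := by
    intro ℓ hℓ
    rw [hωtail ℓ (Finset.mem_Icc.mp hℓ).1 (Finset.mem_Icc.mp hℓ).2]
    simp [he₂1]
  have hω0_0 : ω 0 i0 = 0 := by rw [hω0]; simp [he₂0]
  have hω0_1 : ω 0 i1 = ((b : ℝ) - (m : ℝ)) * lam := by rw [hω0]; simp [he₂1]
  -- norm values
  have hn1 : ‖ω 1‖ ^ 2 = ((b : ℝ) - 1) ^ 2 := by
    rw [hω1, he₁, norm_smul, EuclideanSpace.norm_single, norm_one, mul_one,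
      Real.norm_eq_abs, sq_abs, neg_sq]
  have hnmid : ∀ ℓ ∈ Finset.Icc 2 b, ‖ω ℓ‖ ^ 2 = 1 := by
    intro ℓ hℓ
    rw [hωmid ℓ (Finset.mem_Icc.mp hℓ).1 (Finset.mem_Icc.mp hℓ).2, he₁,
      EuclideanSpace.norm_single, norm_one, one_pow]
  have hntail : ∀ ℓ ∈ Finset.Icc (b + 1) m, ‖ω ℓ‖ ^ 2 = lam ^ 2 := by
    intro ℓ hℓ
    rw [hωtail ℓ (Finset.mem_Icc.mp hℓ).1 (Finset.mem_Icc.mp hℓ).2, he₂, norm_smul,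
      EuclideanSpace.norm_single, norm_one, mul_one, Real.norm_eq_abs, sq_abs]
  have hn0 : ‖ω 0‖ ^ 2 = (((b : ℝ) - (m : ℝ)) * lam) ^ 2 := by
    rw [hω0, he₂, norm_smul, EuclideanSpace.norm_single, norm_one, mul_one,
      Real.norm_eq_abs, sq_abs]
  -- cardinality notation
  set a : ℕ := (S ∩ Finset.Icc 2 b).card with ha
  set t : ℕ := (S ∩ Finset.Icc (b + 1) m).card with ht
  set a' : ℕ := (C ∩ Finset.Icc 2 b).card with ha'
  set t' : ℕ := (C ∩ Finset.Icc (b + 1) m).card with ht'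
  -- partition cardinalities
  have hpart : ∀ P : Finset ℕ, P ⊆ Finset.Icc 1 m →
      (S ∩ P).card + (C ∩ P).card = P.card := by
    intro P hP
    have hdisj : Disjoint (S ∩ P) (C ∩ P) := by
      rw [Finset.disjoint_left]
      intro x hx1 hx2
      have h1 := Finset.mem_inter.mp hx1
      have h2 := Finset.mem_inter.mp hx2
      exact (Finset.mem_sdiff.mp h2.1).2 h1.1
    have hU : (S ∩ P) ∪ (C ∩ P) = P := by
      ext x
      simp only [Finset.mem_union, Finset.mem_inter, hC, Finset.mem_sdiff]
      constructor
      · tauto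
      · intro hx
        by_cases hxS : x ∈ S
        · exact Or.inl ⟨hxS, hx⟩
        · exact Or.inr ⟨⟨hP hx, hxS⟩, hx⟩
    rw [← Finset.card_union_of_disjoint hdisj, hU]
  have hmidsub : Finset.Icc 2 b ⊆ Finset.Icc 1 m := by
    intro x hx
    simp only [Finset.mem_Icc] at *
    omega
  have htailsub : Finset.Icc (b + 1) m ⊆ Finset.Icc 1 m := by
    intro x hx
    simp only [Finset.mem_Icc] at *
    omega
  have haa : a + a' = b - 1 := by
    rw [ha, ha']
    have := hpart _ hmidsub
    rw [Nat.card_Icc] at this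
    omega
  have htt : t + t' = m - b := by
    rw [ht, ht']
    have := hpart _ htailsub
    rw [Nat.card_Icc] at this
    omega
  have haaR : (a : ℝ) + (a' : ℝ) = (b : ℝ) - 1 := by
    have h := congrArg (fun k : ℕ => (k : ℝ)) haa
    rw [Nat.cast_add, Nat.cast_sub (by omega : 1 ≤ b), Nat.cast_one] at h
    exact h
  have httR : (t : ℝ) + (t' : ℝ) = (m : ℝ) - (b : ℝ) := by
    have h := congrArg (fun k : ℕ => (k : ℝ)) htt
    rw [Nat.cast_add, Nat.cast_sub (by omega : b ≤ m)] at h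
    exact h
  have h1mem : 1 ∈ Finset.Icc 1 m := Finset.mem_Icc.mpr ⟨le_refl 1, by omega⟩
  -- coordinate equations
  have h0 := congrArg (fun v : EuclideanSpace ℝ (Fin n) => EuclideanSpace.proj (𝕜 := ℝ) i0 v) hvec
  have h1 := congrArg (fun v : EuclideanSpace ℝ (Fin n) => EuclideanSpace.proj (𝕜 := ℝ) i1 v) hvec
  simp only [map_add, map_sum, PiLp.proj_apply] at h0 h1
  rw [sum_const_on_pieces b m hb hbm S hS _ _ _ _ hω1_0 hωmid0 hωtail0,
    sum_const_on_pieces b m hb hbm C hCsub _ _ _ _ hω1_0 hωmid0 hωtail0, hω0_0] at h0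
  rw [sum_const_on_pieces b m hb hbm S hS _ _ _ _ hω1_1 hωmid1 hωtail1,
    sum_const_on_pieces b m hb hbm C hCsub _ _ _ _ hω1_1 hωmid1 hωtail1, hω0_1] at h1
  rw [sum_const_on_pieces b m hb hbm S hS _ _ _ _ hn1 hnmid hntail,
    sum_const_on_pieces b m hb hbm C hCsub _ _ _ _ hn1 hnmid hntail, hn0] at hnorm
  simp only [ite_self, mul_zero, mul_one, add_zero, zero_add] at h0 h1
  -- t = 0 from the second coordinate
  have hT2 : (2 * (t : ℝ)) * lam = 0 := by linear_combination h1 + lam * httR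
  have hTzero : (t : ℝ) = 0 := by
    rcases mul_eq_zero.mp hT2 with h | h
    · linarith
    · exact absurd h (ne_of_gt hlampos)
  have htnat : t = 0 := by exact_mod_cast hTzero
  have hTempty : S ∩ Finset.Icc (b + 1) m = ∅ := Finset.card_eq_zero.mp htnat
  by_cases h1S : 1 ∈ S
  · -- case 1 ∈ S : get a = b - 1 and conclude
    have h1C : 1 ∉ C := by
      simp only [hC, Finset.mem_sdiff]
      tauto
    rw [if_pos h1S] at h0
    rw [if_neg h1C] at h0
    have haR : (a : ℝ) = (b : ℝ) - 1 := by linarith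
    have hanat : a = b - 1 := by
      have : (a : ℝ) = ((b - 1 : ℕ) : ℝ) := by
        rw [Nat.cast_sub (by omega)]
        simpa using haR
      exact_mod_cast this
    have hmideq : S ∩ Finset.Icc 2 b = Finset.Icc 2 b := by
      apply Finset.eq_of_subset_of_card_le Finset.inter_subset_right
      rw [Nat.card_Icc]
      omega
    ext x
    simp only [Finset.mem_Icc]
    constructor
    · intro hx
      have hxm := Finset.mem_Icc.mp (hS hx)
      refine ⟨hxm.1, ?_⟩
      by_contra hxb
      have : x ∈ S ∩ Finset.Icc (b + 1) m :=
        Finset.mem_inter.mpr ⟨hx, Finset.mem_Icc.mpr ⟨by omega, hxm.2⟩⟩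
      rw [hTempty] at this
      exact absurd this (Finset.notMem_empty x)
    · rintro ⟨hx1, hxb⟩
      by_cases hx2 : 2 ≤ x
      · have : x ∈ S ∩ Finset.Icc 2 b := by
          rw [hmideq]
          exact Finset.mem_Icc.mpr ⟨hx2, hxb⟩
        exact (Finset.mem_inter.mp this).1
      · have : x = 1 := by omega
        rw [this]
        exact h1S
  · -- case 1 ∉ S : contradiction with the norm equation
    exfalso
    have h1C : 1 ∈ C := by
      simp only [hC, Finset.mem_sdiff]
      exact ⟨h1mem, h1S⟩
    rw [if_pos h1C] at h0 hnorm
    rw [if_neg h1S] at h0 hnorm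
    have haR : (a : ℝ) = 0 := by linarith
    have ha'R : (a' : ℝ) = (b : ℝ) - 1 := by linarith
    have ht'R : (t' : ℝ) = (m : ℝ) - (b : ℝ) := by linarith
    rw [haR, ha'R, hTzero, ht'R] at hnorm
    have hzero : (0 : ℝ) = 2 * (b : ℝ) * ((b : ℝ) - 1) := by
      linear_combination hnorm + hlam2
    have hbpos : (0 : ℝ) < (b : ℝ) - 1 := by linarith
    have hpos : (0 : ℝ) < 2 * (b : ℝ) * ((b : ℝ) - 1) :=
      mul_pos (by linarith) hbpos
    linarith
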